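/- arXiv:2510.00132 — 5 statements merged into one kernel-verified Lean document; each statement's English description precedes it below -/
import Mathlib

section
/- Let V be a complex inner product space, let e₀, ψ, φ ∈ V be unit vectors, let δ ∈ [0, 1] with ⟨e₀, ψ⟩ = √δ, and let p̃ = |⟨e₀, φ⟩|². Then |⟨ψ, φ⟩| ≥ √(δ·p̃) − √((1 − δ)(1 − p̃)). In particular, if p̃ ≥ δ − ε for some ε ∈ [0, δ] and √(δ(δ−ε)) ≥ √((1−δ)(1−δ+ε)), then the fidelity satisfies |⟨ψ, φ⟩|² ≥ (√(δ(δ−ε)) − √((1−δ)(1−δ+ε)))². -/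
/-- In a complex inner ℂ product space, let `e₀, ψ, φ` be unit vectors,
`δ ∈ [0, 1]` with `⟨e₀, ψ⟩ = √δ`, and `p̃ = |⟨e₀, φ⟩|²`. Then
`|⟨ψ, φ⟩| ≥ √(δ·p̃) − √((1 − δ)(1 − p̃))`; in particular, if `p̃ ≥ δ − ε` for some
`ε ∈ [0, δ]` with `√(δ(δ−ε)) ≥ √((1−δ)(1−δ+ε))`, then
`|⟨ψ, φ⟩|² ≥ (√(δ(δ−ε)) − √((1−δ)(1−δ+ε)))²`. -/
theorem peak_to_fidelity {V : Type*} [NormedAddCommGroup V] [InnerProductSpace ℂ V]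
    (e₀ ψ φ : V) (he₀ : ‖e₀‖ = 1) (hψ : ‖ψ‖ = 1) (hφ : ‖φ‖ = 1)
    (δ : ℝ) (hδ0 : 0 ≤ δ) (hδ1 : δ ≤ 1)
    (hover : (inner ℂ e₀ ψ : ℂ) = (Real.sqrt δ : ℂ)) :
    (Real.sqrt (δ * ‖(inner ℂ e₀ φ : ℂ)‖ ^ 2)
        - Real.sqrt ((1 - δ) * (1 - ‖(inner ℂ e₀ φ : ℂ)‖ ^ 2))
      ≤ ‖(inner ℂ ψ φ : ℂ)‖)
    ∧ (∀ ε : ℝ, 0 ≤ ε → ε ≤ δ →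
        δ - ε ≤ ‖(inner ℂ e₀ φ : ℂ)‖ ^ 2 →
        Real.sqrt ((1 - δ) * (1 - δ + ε)) ≤ Real.sqrt (δ * (δ - ε)) →
        (Real.sqrt (δ * (δ - ε)) - Real.sqrt ((1 - δ) * (1 - δ + ε))) ^ 2
          ≤ ‖(inner ℂ ψ φ : ℂ)‖ ^ 2) := by
  set a : ℂ := inner ℂ e₀ φ with ha
  set p : ℝ := ‖a‖ ^ 2 with hp
  have hp0 : 0 ≤ p := sq_nonneg _
  have hp1 : p ≤ 1 := by
    have := norm_inner_le_norm (𝕜 := ℂ) e₀ φ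
    rw [he₀, hφ] at this
    calc p = ‖a‖ ^ 2 := rfl
    _ ≤ 1 ^ 2 := by exact pow_le_pow_left₀ (norm_nonneg _) (by simpa using this) 2
    _ = 1 := one_pow 2
  set χ : V := ψ - (Real.sqrt δ : ℂ) • e₀ with hχ
  set ξ : V := φ - a • e₀ with hξ
  have hψeq : ψ = (Real.sqrt δ : ℂ) • e₀ + χ := by rw [hχ]; abel
  have hφeq : φ = a • e₀ + ξ := by rw [hξ]; abel
  have hχe : (inner ℂ e₀ χ : ℂ) = 0 := by
    rw [hχ, inner_sub_right, inner_smul_right, hover, inner_self_eq_norm_sq_to_K, he₀]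
    push_cast; ring
  have hχn : ‖χ‖ ^ 2 = 1 - δ := by
    have : (inner ℂ ψ ((Real.sqrt δ : ℂ) • e₀) : ℂ) = (δ : ℂ) := by
      rw [inner_smul_right, ← inner_conj_symm, hover]
      simp [Complex.conj_ofReal, ← Complex.ofReal_mul, Real.mul_self_sqrt hδ0]
    have h2 := @norm_sub_sq ℂ V _ _ _ ψ ((Real.sqrt δ : ℂ) • e₀)
    rw [this] at h2
    simp only [hψ, norm_smul, he₀, Complex.norm_real, Real.norm_eq_abs,
      abs_of_nonneg (Real.sqrt_nonneg δ)] at h2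
    rw [hχ, h2, mul_one, Real.sq_sqrt hδ0]
    simp [RCLike.ofReal_re]
    ring
  have hξn : ‖ξ‖ ^ 2 = 1 - p := by
    have : (inner ℂ φ (a • e₀) : ℂ) = (p : ℂ) := by
      rw [inner_smul_right, ← inner_conj_symm, ← ha, hp]
      rw [mul_comm, RCLike.conj_mul]
      norm_cast
    have h2 := @norm_sub_sq ℂ V _ _ _ φ (a • e₀)
    rw [this] at h2
    simp only [hφ, norm_smul, he₀] at h2
    rw [hξ, h2, mul_one, hp]
    simp [RCLike.ofReal_re, ← Complex.ofReal_pow, Complex.ofReal_re]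
    ring
  have hinner : (inner ℂ ψ φ : ℂ) = (Real.sqrt δ : ℂ) * a + inner ℂ χ ξ := by
    conv_lhs => rw [hψeq]
    rw [inner_add_left, inner_smul_left, Complex.conj_ofReal, ← ha]
    congr 1
    conv_lhs => rw [hφeq]
    rw [inner_add_right, inner_smul_right, ← inner_conj_symm χ e₀, hχe]
    simp
  have hmain : Real.sqrt (δ * p) - Real.sqrt ((1 - δ) * (1 - p)) ≤ ‖(inner ℂ ψ φ : ℂ)‖ := by
    have h1 : ‖(Real.sqrt δ : ℂ) * a‖ = Real.sqrt (δ * p) := by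
      rw [norm_mul, Complex.norm_real, Real.norm_eq_abs, abs_of_nonneg (Real.sqrt_nonneg δ),
        Real.sqrt_mul hδ0, hp, Real.sqrt_sq (norm_nonneg a)]
    have h2 : ‖(inner ℂ χ ξ : ℂ)‖ ≤ Real.sqrt ((1 - δ) * (1 - p)) := by
      calc ‖(inner ℂ χ ξ : ℂ)‖ ≤ ‖χ‖ * ‖ξ‖ := norm_inner_le_norm χ ξ
        _ = Real.sqrt ((1 - δ) * (1 - p)) := by
            rw [← hχn, ← hξn, Real.sqrt_mul (sq_nonneg _), Real.sqrt_sq (norm_nonneg _),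
              Real.sqrt_sq (norm_nonneg _)]
    calc Real.sqrt (δ * p) - Real.sqrt ((1 - δ) * (1 - p))
        ≤ ‖(Real.sqrt δ : ℂ) * a‖ - ‖(inner ℂ χ ξ : ℂ)‖ := by rw [h1]; linarith
      _ ≤ ‖(Real.sqrt δ : ℂ) * a + inner ℂ χ ξ‖ := by
          have h3 := norm_sub_le ((Real.sqrt δ : ℂ) * a + inner ℂ χ ξ) (inner ℂ χ ξ)
          simp only [add_sub_cancel_right] at h3
          linarith
      _ = ‖(inner ℂ ψ φ : ℂ)‖ := by rw [hinner]
  refine ⟨hmain, fun ε hε0 hεδ hpε hsq => ?_⟩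
  have key : Real.sqrt (δ * (δ - ε)) - Real.sqrt ((1 - δ) * (1 - δ + ε))
      ≤ ‖(inner ℂ ψ φ : ℂ)‖ := by
    have m1 : Real.sqrt (δ * (δ - ε)) ≤ Real.sqrt (δ * p) :=
      Real.sqrt_le_sqrt (by nlinarith)
    have m2 : Real.sqrt ((1 - δ) * (1 - p)) ≤ Real.sqrt ((1 - δ) * (1 - δ + ε)) :=
      Real.sqrt_le_sqrt (by nlinarith)
    linarith
  have hnn : 0 ≤ Real.sqrt (δ * (δ - ε)) - Real.sqrt ((1 - δ) * (1 - δ + ε)) := by linarith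
  exact pow_le_pow_left₀ hnn key 2
end

section
/- Let n ≥ 1, let C be a unitary on ℂ^(2^n), and define the unitary P := (|0⟩⟨0| ⊗ I + |1⟩⟨1| ⊗ C)·(H ⊗ I) on ℂ² ⊗ ℂ^(2^n), where H is the 2 × 2 Hadamard matrix. Let {|x⟩} denote the standard basis of ℂ^(2^n). Then, for the input state |0⟩ ⊗ |0^n⟩: (i) |⟨0, 0^n| P |0, 0^n⟩|² = 1/2; (ii) for every basis vector x, |⟨1, x| P |0, 0^n⟩|² = (1/2)·|⟨x| C |0^n⟩|²; and (iii) ⟨0, x| P |0, 0^n⟩ = 0 for every x ≠ 0^n. In particular, p_x(C) := |⟨x| C |0^n⟩|² = 2·|⟨1, x| P |0, 0^n⟩|² for all x. -/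
open scoped Kronecker

/-- The 2×2 Hadamard matrix `H = (1/√2)·[[1,1],[1,−1]]`. -/
noncomputable def hadamardMat : Matrix (Fin 2) (Fin 2) ℂ :=
  ((Real.sqrt 2 : ℂ))⁻¹ • !![1, 1; 1, -1]

/-- The peaked embedding `P = (|0⟩⟨0| ⊗ I + |1⟩⟨1| ⊗ C)·(H ⊗ I)` of an `n`-qubit
circuit `C` on `ℂ² ⊗ ℂ^(2^n)`. -/
noncomputable def peakedEmbedding (n : ℕ) (C : Matrix (Fin (2 ^ n)) (Fin (2 ^ n)) ℂ) :
    Matrix (Fin 2 × Fin (2 ^ n)) (Fin 2 × Fin (2 ^ n)) ℂ :=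
  (Matrix.single (0 : Fin 2) (0 : Fin 2) (1 : ℂ) ⊗ₖ
      (1 : Matrix (Fin (2 ^ n)) (Fin (2 ^ n)) ℂ)
    + Matrix.single (1 : Fin 2) (1 : Fin 2) (1 : ℂ) ⊗ₖ C)
    * (hadamardMat ⊗ₖ (1 : Matrix (Fin (2 ^ n)) (Fin (2 ^ n)) ℂ))


lemma peakedEmbedding_entry (n : ℕ) (C : Matrix (Fin (2 ^ n)) (Fin (2 ^ n)) ℂ)
    (a : Fin 2) (x : Fin (2 ^ n)) :
    peakedEmbedding n C (a, x) ((0 : Fin 2), (0 : Fin (2 ^ n)))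
      = ((Real.sqrt 2 : ℂ))⁻¹ *
        (if a = 0 then (if x = 0 then 1 else 0) else C x 0) := by
  simp only [peakedEmbedding, Matrix.mul_apply, Fintype.sum_prod_type, Fin.sum_univ_two,
    Matrix.add_apply, Matrix.kroneckerMap_apply, hadamardMat, Matrix.smul_apply,
    Matrix.single, Matrix.of_apply, Matrix.one_apply]
  fin_cases a <;> simp [Finset.sum_ite_eq'] <;> ring

lemma norm_sq_inv_sqrt2_mul (z : ℂ) :
    ‖((Real.sqrt 2 : ℂ))⁻¹ * z‖ ^ 2 = (1 / 2) * ‖z‖ ^ 2 := by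
  rw [norm_mul, mul_pow, norm_inv, Complex.norm_real, Real.norm_eq_abs,
    abs_of_nonneg (Real.sqrt_nonneg 2), inv_pow, Real.sq_sqrt (by norm_num : (2:ℝ) ≥ 0).le]
  ring

/-- For any unitary `C` on `ℂ^(2^n)` and the peaked embedding `P`,
on input `|0⟩⊗|0^n⟩`: (i) `|⟨0,0^n|P|0,0^n⟩|² = 1/2`; (ii) for every `x`,
`|⟨1,x|P|0,0^n⟩|² = (1/2)|⟨x|C|0^n⟩|²`; (iii) `⟨0,x|P|0,0^n⟩ = 0` for `x ≠ 0^n`.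
In particular `p_x(C) = |⟨x|C|0^n⟩|² = 2·|⟨1,x|P|0,0^n⟩|²` for all `x`. -/
theorem peaked_embedding_amplitudes (n : ℕ) (hn : 1 ≤ n)
    (C : Matrix (Fin (2 ^ n)) (Fin (2 ^ n)) ℂ)
    (hC : C ∈ Matrix.unitaryGroup (Fin (2 ^ n)) ℂ) :
    (‖peakedEmbedding n C ((0 : Fin 2), (0 : Fin (2 ^ n))) ((0 : Fin 2), (0 : Fin (2 ^ n)))‖ ^ 2
        = 1 / 2)
    ∧ (∀ x : Fin (2 ^ n),
        ‖peakedEmbedding n C ((1 : Fin 2), x) ((0 : Fin 2), (0 : Fin (2 ^ n)))‖ ^ 2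
          = (1 / 2) * ‖C x (0 : Fin (2 ^ n))‖ ^ 2)
    ∧ (∀ x : Fin (2 ^ n), x ≠ 0 →
        peakedEmbedding n C ((0 : Fin 2), x) ((0 : Fin 2), (0 : Fin (2 ^ n))) = 0)
    ∧ (∀ x : Fin (2 ^ n),
        ‖C x (0 : Fin (2 ^ n))‖ ^ 2
          = 2 * ‖peakedEmbedding n C ((1 : Fin 2), x) ((0 : Fin 2), (0 : Fin (2 ^ n)))‖ ^ 2) := by
  refine ⟨?_, fun x => ?_, fun x hx => ?_, fun x => ?_⟩
  · rw [peakedEmbedding_entry]; simp [norm_sq_inv_sqrt2_mul]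
  · rw [peakedEmbedding_entry]; simpa using norm_sq_inv_sqrt2_mul (C x 0)
  · rw [peakedEmbedding_entry]; simp [hx]
  · rw [peakedEmbedding_entry]
    simp only [Fin.one_eq_zero_iff, if_neg (by norm_num : ¬ (2:ℕ) = 1)]
    rw [norm_sq_inv_sqrt2_mul]; ring
end

section
/- Let Y be a random string in {0,1}^n, let E ∈ {0,1}^n have i.i.d. Bernoulli(r) coordinates independent of Y with r ∈ [0, 1/2), and let X = Y ⊕ E (coordinatewise XOR). Fix x⋆ ∈ {0,1}^n, set p = Pr[Y = x⋆], and suppose that for a coordinate j, Pr[Y_j = x⋆_j | Y ≠ x⋆] ≥ 1/2 (no systematic per-bit bias away from x⋆). Then Pr[X_j = x⋆_j] ≥ 1/2 + (1/2)·p·(1 − 2r); i.e., each observed bit has bias toward the peaked string's bit of at least (1/2)·p_max·(1 − 2r). -/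
open MeasureTheory

/-- Let `Y` be a random string in `{0,1}^n`, `E` an independent string
of i.i.d. `Bernoulli(r)` bits (`r < 1/2`), and `X = Y ⊕ E`. Fix `x⋆`, set
`p = Pr[Y = x⋆]`, and suppose coordinate `j` has no systematic bias away from `x⋆`:
`Pr[Y_j = x⋆_j ∧ Y ≠ x⋆] ≥ (1/2)·Pr[Y ≠ x⋆]`. Then
`Pr[X_j = x⋆_j] ≥ 1/2 + (1/2)·p·(1 − 2r)`. -/
theorem majority_bit_bias {Ω : Type*} [MeasurableSpace Ω]
    (μ : Measure Ω) [IsProbabilityMeasure μ]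
    (n : ℕ) (r : ℝ) (hr0 : 0 ≤ r) (hr1 : r < 1 / 2)
    (Y E : Ω → (Fin n → Bool))
    (hYmeas : Measurable Y) (hEmeas : Measurable E)
    (hindep : ProbabilityTheory.IndepFun Y E μ)
    (hElaw : μ.map E = Measure.pi fun _ : Fin n =>
      (PMF.bernoulli (Real.toNNReal r)
        (by rw [Real.toNNReal_le_one]; linarith)).toMeasure)
    (xstar : Fin n → Bool) (j : Fin n)
    (hbias : (1 / 2) * (μ {ω | Y ω ≠ xstar}).toReal
      ≤ (μ {ω | Y ω j = xstar j ∧ Y ω ≠ xstar}).toReal) :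
    1 / 2 + (1 / 2) * (μ {ω | Y ω = xstar}).toReal * (1 - 2 * r)
      ≤ (μ {ω | xor (Y ω j) (E ω j) = xstar j}).toReal := by
  classical
  have hr1' : ENNReal.ofReal r ≤ 1 := by rw [ENNReal.ofReal_le_one]; linarith
  set ν := (PMF.bernoulli (Real.toNNReal r) (by rw [Real.toNNReal_le_one]; linarith)).toMeasure with hν
  -- marginal of E at coordinate j
  have hmeasYj : Measurable fun ω => Y ω j := (measurable_pi_apply j).comp hYmeas
  have hmeasEj : Measurable fun ω => E ω j := (measurable_pi_apply j).comp hEmeas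
  have hEj : μ {ω | E ω j = true} = ENNReal.ofReal r := by
    have hset : {ω | E ω j = true} = E ⁻¹' ((fun f : Fin n → Bool => f j) ⁻¹' {true}) := rfl
    have hpre : ((fun f : Fin n → Bool => f j) ⁻¹' {true})
        = Set.pi Set.univ (fun i => if i = j then ({true} : Set Bool) else Set.univ) := by
      ext f
      simp only [Set.mem_preimage, Set.mem_singleton_iff, Set.mem_pi, Set.mem_univ, true_implies]
      constructor
      · intro h i; by_cases hi : i = j <;> simp [hi, h]
      · intro h; have := h j; simpa using this
    rw [hset, ← Measure.map_apply hEmeas ((measurable_pi_apply j) (measurableSet_singleton true)),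
      hElaw, hpre, Measure.pi_pi]
    have hp : ∀ i : Fin n, ((PMF.bernoulli (Real.toNNReal r) (by rw [Real.toNNReal_le_one]; linarith)).toMeasure)
        (if i = j then ({true} : Set Bool) else Set.univ)
        = if i = j then ENNReal.ofReal r else 1 := by
      intro i
      by_cases hi : i = j
      · simp only [hi, if_true]
        rw [PMF.toMeasure_apply_singleton _ _ (measurableSet_singleton true)]
        simp [PMF.bernoulli_apply, ENNReal.ofReal]
      · rw [if_neg hi, if_neg hi]; exact measure_univ
    simp only [hν, hp]
    simp
  -- independence of the j-th bits
  have hind : ∀ s t : Set Bool,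
      μ ((fun ω => Y ω j) ⁻¹' s ∩ (fun ω => E ω j) ⁻¹' t)
        = μ ((fun ω => Y ω j) ⁻¹' s) * μ ((fun ω => E ω j) ⁻¹' t) := by
    intro s t
    exact (hindep.comp (measurable_pi_apply j) (measurable_pi_apply j)).measure_inter_preimage_eq_mul
      s t (trivial) (trivial)
  set b := xstar j with hb
  -- decompose the target event
  have hS : {ω | xor (Y ω j) (E ω j) = b}
      = ((fun ω => Y ω j) ⁻¹' {b} ∩ (fun ω => E ω j) ⁻¹' {false})
        ∪ ((fun ω => Y ω j) ⁻¹' {!b} ∩ (fun ω => E ω j) ⁻¹' {true}) := by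
    ext ω
    simp only [Set.mem_setOf_eq, Set.mem_union, Set.mem_inter_iff, Set.mem_preimage,
      Set.mem_singleton_iff]
    cases hE : E ω j <;> cases hY : Y ω j <;> cases hbb : b <;> simp
  have hdisj : Disjoint
      ((fun ω => Y ω j) ⁻¹' {b} ∩ (fun ω => E ω j) ⁻¹' {false})
      ((fun ω => Y ω j) ⁻¹' {!b} ∩ (fun ω => E ω j) ⁻¹' {true}) := by
    rw [Set.disjoint_iff]
    rintro ω ⟨⟨-, h1⟩, ⟨-, h2⟩⟩
    simp only [Set.mem_preimage, Set.mem_singleton_iff] at h1 h2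
    rw [h1] at h2; exact absurd h2 (by simp)
  have hmeas2 : MeasurableSet ((fun ω => Y ω j) ⁻¹' {!b} ∩ (fun ω => E ω j) ⁻¹' {true}) :=
    (hmeasYj (measurableSet_singleton _)).inter (hmeasEj (measurableSet_singleton _))
  -- complements
  have hcomplY : (fun ω => Y ω j) ⁻¹' {!b} = ((fun ω => Y ω j) ⁻¹' {b})ᶜ := by
    ext ω; simp only [Set.mem_preimage, Set.mem_singleton_iff, Set.mem_compl_iff]
    cases hY : Y ω j <;> cases hbb : b <;> simp
  have hcomplE : (fun ω => E ω j) ⁻¹' {false} = ((fun ω => E ω j) ⁻¹' {true})ᶜ := by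
    ext ω; simp only [Set.mem_preimage, Set.mem_singleton_iff, Set.mem_compl_iff]
    cases hE : E ω j <;> simp
  have hEt : (fun ω => E ω j) ⁻¹' {true} = {ω | E ω j = true} := rfl
  set pA := μ ((fun ω => Y ω j) ⁻¹' {b}) with hpA
  have hμcY : μ (((fun ω => Y ω j) ⁻¹' {b})ᶜ) = 1 - pA := by
    rw [measure_compl (hmeasYj (measurableSet_singleton _)) (measure_ne_top μ _), measure_univ]
  have hμcE : μ (((fun ω => E ω j) ⁻¹' {true})ᶜ) = 1 - ENNReal.ofReal r := by
    rw [measure_compl (hmeasEj (measurableSet_singleton _)) (measure_ne_top μ _), measure_univ,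
      hEt, hEj]
  have hμS : μ {ω | xor (Y ω j) (E ω j) = b}
      = pA * (1 - ENNReal.ofReal r) + (1 - pA) * ENNReal.ofReal r := by
    rw [hS, measure_union hdisj hmeas2, hind, hind, hcomplY, hcomplE, hμcY, hμcE, hEt, hEj]
  -- convert to reals
  set a := pA.toReal with ha
  have hpA1 : pA ≤ 1 := prob_le_one
  have ha1 : a ≤ 1 := by
    rw [ha]; exact ENNReal.toReal_le_of_le_ofReal zero_le_one (by simpa using hpA1)
  have hStoReal : (μ {ω | xor (Y ω j) (E ω j) = b}).toReal
      = a * (1 - r) + (1 - a) * r := by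
    rw [hμS, ENNReal.toReal_add, ENNReal.toReal_mul, ENNReal.toReal_mul]
    · congr 1
      · congr 1
        rw [ENNReal.toReal_sub_of_le hr1' ENNReal.one_ne_top, ENNReal.toReal_one,
          ENNReal.toReal_ofReal hr0]
      · congr 1
        · rw [ENNReal.toReal_sub_of_le hpA1 ENNReal.one_ne_top, ENNReal.toReal_one]
        · exact ENNReal.toReal_ofReal hr0
    · exact ENNReal.mul_ne_top (measure_ne_top μ _)
        (ENNReal.sub_ne_top ENNReal.one_ne_top)
    · exact ENNReal.mul_ne_top (ENNReal.sub_ne_top ENNReal.one_ne_top) ENNReal.ofReal_ne_top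
  -- lower bound on a
  set p := (μ {ω | Y ω = xstar}).toReal with hp'
  have hmeasYx : MeasurableSet {ω | Y ω = xstar} := hYmeas (measurableSet_singleton xstar)
  have hmeasYne : MeasurableSet {ω | Y ω ≠ xstar} := hmeasYx.compl
  have hsplit : (fun ω => Y ω j) ⁻¹' {b}
      = {ω | Y ω = xstar} ∪ {ω | Y ω j = xstar j ∧ Y ω ≠ xstar} := by
    ext ω
    simp only [Set.mem_preimage, Set.mem_singleton_iff, Set.mem_union, Set.mem_setOf_eq, hb]
    constructor
    · intro h
      by_cases hx : Y ω = xstar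
      · exact Or.inl hx
      · exact Or.inr ⟨h, hx⟩
    · rintro (h | ⟨h, -⟩)
      · rw [h]
      · exact h
  have hdisj2 : Disjoint {ω | Y ω = xstar} {ω | Y ω j = xstar j ∧ Y ω ≠ xstar} := by
    rw [Set.disjoint_iff]
    rintro ω ⟨h1, -, h2⟩; exact absurd h1 h2
  have hmeasYjx : MeasurableSet {ω | Y ω j = xstar j ∧ Y ω ≠ xstar} := by
    have : {ω | Y ω j = xstar j ∧ Y ω ≠ xstar}
        = (fun ω => Y ω j) ⁻¹' {xstar j} ∩ {ω | Y ω ≠ xstar} := rfl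
    rw [this]
    exact (hmeasYj (measurableSet_singleton _)).inter hmeasYne
  have hpAeq : pA = μ {ω | Y ω = xstar} + μ {ω | Y ω j = xstar j ∧ Y ω ≠ xstar} := by
    rw [hpA, hsplit, measure_union hdisj2 hmeasYjx]
  have hne : μ {ω | Y ω ≠ xstar} = 1 - μ {ω | Y ω = xstar} := by
    have : {ω | Y ω ≠ xstar} = {ω | Y ω = xstar}ᶜ := rfl
    rw [this, measure_compl hmeasYx (measure_ne_top μ _), measure_univ]
  have hp1 : μ {ω | Y ω = xstar} ≤ 1 := prob_le_one
  have hneR : (μ {ω | Y ω ≠ xstar}).toReal = 1 - p := by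
    rw [hne, ENNReal.toReal_sub_of_le hp1 ENNReal.one_ne_top, ENNReal.toReal_one, hp']
  have haeq : a = p + (μ {ω | Y ω j = xstar j ∧ Y ω ≠ xstar}).toReal := by
    rw [ha, hpAeq, ENNReal.toReal_add (measure_ne_top μ _) (measure_ne_top μ _), hp']
  have halb : 1 / 2 + p / 2 ≤ a := by
    rw [haeq]
    have := hbias
    rw [hneR] at this
    linarith
  -- finish
  rw [hStoReal]
  nlinarith [halb, ha1, hr1, hr0, ENNReal.toReal_nonneg (a := μ {ω | Y ω = xstar})]
end

section
/- Let d ≥ 2 and N ≥ 1, and let p₁, …, p_N be nonnegative reals with Σ_i p_i = 1, Σ_i p_i² = 2d/(N(d+1)), and Σ_i p_i³ = 6d²/(N²(d+1)(d+2)). Then Σ over {i : p_i ≥ 1/N} of p_i is at least (d−1)²(d+2)/(6d²(d+1)). In particular, this lower bound is independent of N and tends to 1/6 as d → ∞. -/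
open scoped BigOperators

/-- Let `d ≥ 2`, `N ≥ 1`, and let `p₁, …, p_N ≥ 0` with
`Σ p_i = 1`, `Σ p_i² = 2d/(N(d+1))` and `Σ p_i³ = 6d²/(N²(d+1)(d+2))` (the exact
3-design power sums). Then `Σ_{i : p_i ≥ 1/N} p_i ≥ (d−1)²(d+2)/(6d²(d+1))` —
a bound independent of `N` tending to `1/6` as `d → ∞`. -/
theorem three_design_tail_bound (d : ℝ) (hd : 2 ≤ d) (N : ℕ) (hN : 1 ≤ N)
    (p : Fin N → ℝ) (hp : ∀ i, 0 ≤ p i)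
    (h1 : ∑ i, p i = 1)
    (h2 : ∑ i, p i ^ 2 = 2 * d / (N * (d + 1)))
    (h3 : ∑ i, p i ^ 3 = 6 * d ^ 2 / ((N : ℝ) ^ 2 * (d + 1) * (d + 2))) :
    (d - 1) ^ 2 * (d + 2) / (6 * d ^ 2 * (d + 1))
      ≤ ∑ i ∈ Finset.univ.filter fun i => 1 / (N : ℝ) ≤ p i, p i := by
  have hN0 : (0 : ℝ) < N := by exact_mod_cast hN
  set A : Finset (Fin N) := Finset.univ.filter fun i => 1 / (N : ℝ) ≤ p i with hA
  set T : ℝ := ∑ i ∈ A, p i with hT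
  have hT0 : 0 ≤ T := Finset.sum_nonneg fun i _ => hp i
  -- complement bound
  have hcomp : ∑ i ∈ Aᶜ, p i ^ 2 ≤ 1 / N := by
    calc ∑ i ∈ Aᶜ, p i ^ 2 ≤ ∑ i ∈ Aᶜ, (1 / N) * p i := by
          refine Finset.sum_le_sum fun i hi => ?_
          have : ¬ (1 / (N : ℝ) ≤ p i) := by
            simpa [hA, Finset.mem_compl, Finset.mem_filter] using hi
          have hlt : p i < 1 / N := not_le.mp this
          calc p i ^ 2 = p i * p i := sq (p i)
            _ ≤ (1 / N) * p i := mul_le_mul_of_nonneg_right hlt.le (hp i)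
      _ = (1 / N) * ∑ i ∈ Aᶜ, p i := by rw [Finset.mul_sum]
      _ ≤ (1 / N) * 1 := by
          refine mul_le_mul_of_nonneg_left ?_ (by positivity)
          calc ∑ i ∈ Aᶜ, p i ≤ ∑ i, p i :=
                Finset.sum_le_sum_of_subset_of_nonneg (Finset.subset_univ _)
                  fun i _ _ => hp i
            _ = 1 := h1
      _ = 1 / N := mul_one _
  -- Cauchy–Schwarz on A
  have hCS : (∑ i ∈ A, p i ^ 2) ^ 2 ≤ (∑ i ∈ A, p i ^ 3) * T := by
    refine Finset.sum_sq_le_sum_mul_sum_of_sq_eq_mul A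
      (fun i _ => pow_nonneg (hp i) 3) (fun i _ => hp i) (fun i _ => by ring)
  have h3A : ∑ i ∈ A, p i ^ 3 ≤ ∑ i, p i ^ 3 :=
    Finset.sum_le_sum_of_subset_of_nonneg (Finset.subset_univ _)
      fun i _ _ => pow_nonneg (hp i) 3
  have hsplit : ∑ i ∈ A, p i ^ 2 = (∑ i, p i ^ 2) - ∑ i ∈ Aᶜ, p i ^ 2 := by
    have := Finset.sum_add_sum_compl A fun i => p i ^ 2
    linarith
  have hd1 : (0:ℝ) < d + 1 := by linarith
  have hd2 : (0:ℝ) < d + 2 := by linarith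
  have hlow : (d - 1) / (N * (d + 1)) ≤ ∑ i ∈ A, p i ^ 2 := by
    rw [hsplit, h2]
    have : (d - 1) / (N * (d + 1)) = 2 * d / (N * (d + 1)) - 1 / N := by
      field_simp; ring
    linarith
  have hlow0 : (0:ℝ) ≤ (d - 1) / (N * (d + 1)) := by
    apply div_nonneg <;> nlinarith
  have hkey : ((d - 1) / (N * (d + 1))) ^ 2
      ≤ (6 * d ^ 2 / ((N : ℝ) ^ 2 * (d + 1) * (d + 2))) * T := by
    calc ((d - 1) / (N * (d + 1))) ^ 2 ≤ (∑ i ∈ A, p i ^ 2) ^ 2 := by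
          exact pow_le_pow_left₀ hlow0 hlow 2
      _ ≤ (∑ i ∈ A, p i ^ 3) * T := hCS
      _ ≤ (6 * d ^ 2 / ((N : ℝ) ^ 2 * (d + 1) * (d + 2))) * T := by
          rw [← h3]; exact mul_le_mul_of_nonneg_right h3A hT0
  -- final algebra
  rw [div_le_iff₀ (by positivity)]
  have hexp : ((d - 1) / (N * (d + 1))) ^ 2 = (d-1)^2 / ((N:ℝ)^2 * (d+1)^2) := by
    rw [div_pow]; ring_nf
  have hN2 : (0:ℝ) < (N:ℝ)^2 := by positivity
  rw [hexp, div_le_iff₀ (by positivity), div_mul_eq_mul_div, div_mul_eq_mul_div,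
    le_div_iff₀ (by positivity)] at hkey
  nlinarith [hT0, hN2, mul_pos hN2 hd1, mul_pos (mul_pos hN2 hd1) hd2]
end

section
/- Let d ≥ 1, let k ≥ 1 be an integer, let ε ≥ 0, and let δ ∈ (0, 1). Let φ₁, …, φ_N be unit vectors in ℂ^d such that for every unit vector φ' ∈ ℂ^d, (1/N)·Σ_{j=1}^{N} |⟨φ_j, φ'⟩|^(2k) ≤ (1+ε)·binom(d+k−1, k)^(−1). Then: (i) for every unit vector φ', the number of indices j with d_FS(φ_j, φ') ≤ δ is at most N·(1+ε)·(1−δ²)^(−k)·binom(d+k−1, k)^(−1); and (ii) there exists a subset S ⊆ {1, …, N} with d_FS(φ_i, φ_j) > δ for all distinct i, j ∈ S and |S| ≥ (1−δ²)^k/(1+ε) · binom(d+k−1, k). -/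
open scoped BigOperators

/-- Let `φ₁, …, φ_N` be unit vectors in `ℂ^d` forming an
`ε`-approximate spherical `k`-design: for every unit vector `φ'`,
`(1/N)·Σ_j |⟨φ_j, φ'⟩|^(2k) ≤ (1+ε)/binom(d+k−1, k)`. Then: (i) every Fubini–Study
ball of radius `δ` contains at most `N(1+ε)(1−δ²)^(−k)/binom(d+k−1, k)` of the `φ_j`;
and (ii) there is a pairwise `δ`-separated (in Fubini–Study distance) subset of the
`φ_j` of size at least `(1−δ²)^k/(1+ε)·binom(d+k−1, k)`. -/
theorem approx_design_packing (d k : ℕ) (hd : 1 ≤ d) (hk : 1 ≤ k)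
    (ε δ : ℝ) (hε : 0 ≤ ε) (hδ0 : 0 < δ) (hδ1 : δ < 1)
    (N : ℕ) (hN : 1 ≤ N)
    (φ : Fin N → EuclideanSpace ℂ (Fin d)) (hφ : ∀ j, ‖φ j‖ = 1)
    (hdesign : ∀ φ' : EuclideanSpace ℂ (Fin d), ‖φ'‖ = 1 →
      (1 / (N : ℝ)) * ∑ j, ‖(inner ℂ (φ j) φ' : ℂ)‖ ^ (2 * k)
        ≤ (1 + ε) / (Nat.choose (d + k - 1) k : ℝ)) :
    (∀ φ' : EuclideanSpace ℂ (Fin d), ‖φ'‖ = 1 →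
      ((Finset.univ.filter
          fun j => Real.sqrt (1 - ‖(inner ℂ (φ j) φ' : ℂ)‖ ^ 2) ≤ δ).card : ℝ)
        ≤ (N : ℝ) * (1 + ε) / ((1 - δ ^ 2) ^ k * (Nat.choose (d + k - 1) k : ℝ)))
    ∧ (∃ S : Finset (Fin N),
        (∀ i ∈ S, ∀ j ∈ S, i ≠ j →
          δ < Real.sqrt (1 - ‖(inner ℂ (φ i) (φ j) : ℂ)‖ ^ 2))
        ∧ (1 - δ ^ 2) ^ k / (1 + ε) * (Nat.choose (d + k - 1) k : ℝ) ≤ (S.card : ℝ)) := by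
  classical
  have hCpos : (0:ℝ) < (Nat.choose (d + k - 1) k : ℝ) := by
    exact_mod_cast Nat.choose_pos (by omega)
  have hDpos : (0:ℝ) < 1 - δ ^ 2 := by nlinarith
  have hDk : (0:ℝ) < (1 - δ ^ 2) ^ k := pow_pos hDpos k
  have hNpos : (0:ℝ) < (N : ℝ) := by exact_mod_cast hN
  have h1e : (0:ℝ) < 1 + ε := by linarith
  have part1 : ∀ φ' : EuclideanSpace ℂ (Fin d), ‖φ'‖ = 1 →
      ((Finset.univ.filter
          fun j => Real.sqrt (1 - ‖(inner ℂ (φ j) φ' : ℂ)‖ ^ 2) ≤ δ).card : ℝ)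
        ≤ (N : ℝ) * (1 + ε) / ((1 - δ ^ 2) ^ k * (Nat.choose (d + k - 1) k : ℝ)) := by
    intro φ' hφ'
    set F := Finset.univ.filter
        fun j => Real.sqrt (1 - ‖(inner ℂ (φ j) φ' : ℂ)‖ ^ 2) ≤ δ with hF
    have key : (F.card : ℝ) * (1 - δ ^ 2) ^ k
        ≤ ∑ j, ‖(inner ℂ (φ j) φ' : ℂ)‖ ^ (2 * k) := by
      have h1 : (F.card : ℝ) * (1 - δ ^ 2) ^ k = ∑ _j ∈ F, (1 - δ ^ 2) ^ k := by
        rw [Finset.sum_const, nsmul_eq_mul]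
      rw [h1]
      refine le_trans (Finset.sum_le_sum ?_)
        (Finset.sum_le_sum_of_subset_of_nonneg (Finset.subset_univ F) ?_)
      · intro j hj
        have hjm := (Finset.mem_filter.mp hj).2
        set x := ‖(inner ℂ (φ j) φ' : ℂ)‖ with hx
        have hx0 : 0 ≤ x := norm_nonneg _
        have hxx : 1 - δ ^ 2 ≤ x ^ 2 := by
          by_cases h : 0 ≤ 1 - x ^ 2
          · have h2 := Real.sq_sqrt h
            nlinarith [Real.sqrt_nonneg (1 - x ^ 2)]
          · nlinarith
        calc (1 - δ ^ 2) ^ k ≤ (x ^ 2) ^ k := pow_le_pow_left₀ hDpos.le hxx k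
          _ = x ^ (2 * k) := by rw [← pow_mul]
      · intro j _ _
        positivity
    have hd2 := hdesign φ' hφ'
    have hsum : ∑ j, ‖(inner ℂ (φ j) φ' : ℂ)‖ ^ (2 * k)
        ≤ (N : ℝ) * ((1 + ε) / (Nat.choose (d + k - 1) k : ℝ)) := by
      have h3 := mul_le_mul_of_nonneg_left hd2 hNpos.le
      have h4 : (N : ℝ) * ((1 / (N : ℝ)) * ∑ j, ‖(inner ℂ (φ j) φ' : ℂ)‖ ^ (2 * k))
          = ∑ j, ‖(inner ℂ (φ j) φ' : ℂ)‖ ^ (2 * k) := by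
        field_simp
      linarith [h3, h4.ge, h4.le]
    rw [le_div_iff₀ (by positivity)]
    have h5 : (F.card : ℝ) * (1 - δ ^ 2) ^ k * (Nat.choose (d + k - 1) k : ℝ)
        ≤ (N : ℝ) * ((1 + ε) / (Nat.choose (d + k - 1) k : ℝ))
          * (Nat.choose (d + k - 1) k : ℝ) :=
      mul_le_mul_of_nonneg_right (key.trans hsum) hCpos.le
    have h6 : (N : ℝ) * ((1 + ε) / (Nat.choose (d + k - 1) k : ℝ))
          * (Nat.choose (d + k - 1) k : ℝ) = (N : ℝ) * (1 + ε) := by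
      field_simp
    rw [h6] at h5
    calc (F.card : ℝ) * ((1 - δ ^ 2) ^ k * (Nat.choose (d + k - 1) k : ℝ))
        = (F.card : ℝ) * (1 - δ ^ 2) ^ k * (Nat.choose (d + k - 1) k : ℝ) := by ring
      _ ≤ (N : ℝ) * (1 + ε) := h5
  refine ⟨part1, ?_⟩
  set P : Finset (Fin N) → Prop := fun S => ∀ i ∈ S, ∀ j ∈ S, i ≠ j →
      δ < Real.sqrt (1 - ‖(inner ℂ (φ i) (φ j) : ℂ)‖ ^ 2) with hP
  obtain ⟨S, hSmem, hSmax⟩ := Finset.exists_max_image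
    ((Finset.univ : Finset (Fin N)).powerset.filter P) Finset.card
    ⟨∅, by simp [hP]⟩
  have hSsep : P S := (Finset.mem_filter.mp hSmem).2
  refine ⟨S, hSsep, ?_⟩
  have hself : ∀ j : Fin N, Real.sqrt (1 - ‖(inner ℂ (φ j) (φ j) : ℂ)‖ ^ 2) ≤ δ := by
    intro j
    have : (inner ℂ (φ j) (φ j) : ℂ) = (1 : ℂ) := by
      rw [inner_self_eq_norm_sq_to_K, hφ j]; norm_num
    rw [this]
    simp [hδ0.le]
  have cover : ∀ j : Fin N, ∃ i ∈ S,
      Real.sqrt (1 - ‖(inner ℂ (φ j) (φ i) : ℂ)‖ ^ 2) ≤ δ := by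
    intro j
    by_contra h
    push_neg at h
    have hjS : j ∉ S := fun hj => absurd (hself j) (not_le.mpr (h j hj))
    have hins : P (insert j S) := by
      intro a ha b hb hab
      rcases Finset.mem_insert.mp ha with rfl | ha' <;>
        rcases Finset.mem_insert.mp hb with rfl | hb'
      · exact absurd rfl hab
      · exact h b hb'
      · rw [norm_inner_symm]; exact h a ha'
      · exact hSsep a ha' b hb' hab
    have hmem : insert j S ∈ (Finset.univ : Finset (Fin N)).powerset.filter P :=
      Finset.mem_filter.mpr ⟨Finset.mem_powerset.mpr (Finset.subset_univ _), hins⟩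
    have := hSmax _ hmem
    rw [Finset.card_insert_of_notMem hjS] at this
    omega
  have hcount : (N : ℝ) ≤ (S.card : ℝ)
      * ((N : ℝ) * (1 + ε) / ((1 - δ ^ 2) ^ k * (Nat.choose (d + k - 1) k : ℝ))) := by
    have hsub : (Finset.univ : Finset (Fin N)) ⊆ S.biUnion (fun i =>
        Finset.univ.filter fun j =>
          Real.sqrt (1 - ‖(inner ℂ (φ j) (φ i) : ℂ)‖ ^ 2) ≤ δ) := by
      intro j _
      obtain ⟨i, hi, hle⟩ := cover j
      exact Finset.mem_biUnion.mpr ⟨i, hi, Finset.mem_filter.mpr ⟨Finset.mem_univ _, hle⟩⟩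
    have h1 : N ≤ ∑ i ∈ S, (Finset.univ.filter fun j =>
          Real.sqrt (1 - ‖(inner ℂ (φ j) (φ i) : ℂ)‖ ^ 2) ≤ δ).card := by
      calc N = (Finset.univ : Finset (Fin N)).card := by simp
        _ ≤ _ := (Finset.card_le_card hsub).trans Finset.card_biUnion_le
    have h2 : ((∑ i ∈ S, (Finset.univ.filter fun j =>
          Real.sqrt (1 - ‖(inner ℂ (φ j) (φ i) : ℂ)‖ ^ 2) ≤ δ).card : ℕ) : ℝ)
        ≤ (S.card : ℝ) * ((N : ℝ) * (1 + ε)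
            / ((1 - δ ^ 2) ^ k * (Nat.choose (d + k - 1) k : ℝ))) := by
      push_cast
      calc (∑ i ∈ S, ((Finset.univ.filter fun j =>
            Real.sqrt (1 - ‖(inner ℂ (φ j) (φ i) : ℂ)‖ ^ 2) ≤ δ).card : ℝ))
          ≤ ∑ _i ∈ S, ((N : ℝ) * (1 + ε)
              / ((1 - δ ^ 2) ^ k * (Nat.choose (d + k - 1) k : ℝ))) :=
            Finset.sum_le_sum (fun i _ => part1 (φ i) (hφ i))
        _ = _ := by rw [Finset.sum_const, nsmul_eq_mul]
    calc (N : ℝ) ≤ _ := by exact_mod_cast h1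
      _ ≤ _ := h2
  rw [div_mul_eq_mul_div, div_le_iff₀ h1e]
  have hB : (0:ℝ) < (1 - δ ^ 2) ^ k * (Nat.choose (d + k - 1) k : ℝ) := by positivity
  have h7 := mul_le_mul_of_nonneg_right hcount hB.le
  have h8 : (S.card : ℝ) * ((N : ℝ) * (1 + ε)
        / ((1 - δ ^ 2) ^ k * (Nat.choose (d + k - 1) k : ℝ)))
      * ((1 - δ ^ 2) ^ k * (Nat.choose (d + k - 1) k : ℝ))
      = (S.card : ℝ) * ((N : ℝ) * (1 + ε)) := by
    field_simp
  rw [h8] at h7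
  have h9 : (1 - δ ^ 2) ^ k * (Nat.choose (d + k - 1) k : ℝ) ≤ (S.card : ℝ) * (1 + ε) := by
    nlinarith
  linarith
end
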